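/- Let R be a finite ring with identity, G ≤ Sym({1,…,n}) acting on V = R^n by coordinate permutation, and H ≤ G with |H| invertible in R. If C ⊆ V is a left G-code, then the H-dual of Cθ_H inside Vθ_H satisfies ⊥_H(Cθ_H) = ((⊥C)θ_H)M_H, where M_H is the H-orbit length map. -/

import Mathlib

open scoped BigOperators

/-- Coordinate-permutation action: `(v · g) i = v (g⁻¹ i)`. -/
def pAct {α : Type} {n : ℕ} (g : Equiv.Perm (Fin n)) (v : Fin n → α) : Fin n → α :=
  fun i => v (g⁻¹ i)

/-- Hayden's operator `θ_H`: `v θ_H = |H|⁻¹ ∑_{h ∈ H} v h`. -/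
noncomputable def theta {R : Type} [Ring R] {n : ℕ} (H : Subgroup (Equiv.Perm (Fin n)))
    (v : Fin n → R) : Fin n → R :=
  fun i => Ring.inverse ((Nat.card H : R)) * ∑ᶠ h ∈ (H : Set (Equiv.Perm (Fin n))), v (h⁻¹ i)

/-- The left dual of a set of vectors in `R^n`. -/
def leftDual {R : Type} [Ring R] {n : ℕ} (S : Set (Fin n → R)) : Set (Fin n → R) :=
  {u | ∀ v ∈ S, ∑ i, u i * v i = 0}

/-- The orbit of a coordinate `j` under the permutation group `H`. -/
def orbSet {n : ℕ} (H : Subgroup (Equiv.Perm (Fin n))) (j : Fin n) : Set (Fin n) :=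
  {m | ∃ h ∈ H, h j = m}

/-- The `H`-orbit length map `M_H`, multiplying the `j`-th coordinate
by the size of the `H`-orbit of `j`. -/
noncomputable def MH {R : Type} [Ring R] {n : ℕ} (H : Subgroup (Equiv.Perm (Fin n)))
    (v : Fin n → R) : Fin n → R :=
  fun j => (Nat.card (orbSet H j) : R) * v j

section Stmt3Aux

open scoped Classical

variable {n : ℕ} {R : Type} [Ring R]

/-- `H`-fixed vectors. -/
def isFix {n : ℕ} {R : Type} (H : Subgroup (Equiv.Perm (Fin n))) (v : Fin n → R) : Prop :=
  ∀ h ∈ H, ∀ i, v (h⁻¹ i) = v i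

variable (H : Subgroup (Equiv.Perm (Fin n)))

lemma isFix_apply {v : Fin n → R} (hv : isFix H v) {h : Equiv.Perm (Fin n)} (hh : h ∈ H)
    (i : Fin n) : v (h i) = v i := by
  have := hv h⁻¹ (H.inv_mem hh) i
  simpa using this

lemma theta_apply (v : Fin n → R) (i : Fin n) :
    theta H v i =
      Ring.inverse ((Nat.card H : R)) * ∑ h : H, v ((h : Equiv.Perm (Fin n))⁻¹ i) := by
  unfold theta
  congr 1
  rw [finsum_mem_eq_toFinset_sum]
  exact Finset.sum_subtype _ (fun x => by simp) _

lemma theta_isFix (v : Fin n → R) : isFix H (theta H v) := by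
  intro h hh i
  rw [theta_apply, theta_apply]
  congr 1
  refine Fintype.sum_equiv (Equiv.mulLeft (⟨h, hh⟩ : H)) _ _ (fun k => ?_)
  congr 1

lemma theta_of_isFix (hH : IsUnit ((Nat.card H : R))) {v : Fin n → R} (hv : isFix H v) :
    theta H v = v := by
  funext i
  rw [theta_apply]
  rw [Finset.sum_congr rfl (fun (k : H) _ => hv _ k.2 i), Finset.sum_const, Finset.card_univ,
    nsmul_eq_mul, ← Nat.card_eq_fintype_card, ← mul_assoc, Ring.inverse_mul_cancel _ hH, one_mul]

lemma range_theta (hH : IsUnit ((Nat.card H : R))) :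
    Set.range (theta (R := R) H) = {v | isFix H v} := by
  ext v
  constructor
  · rintro ⟨u, rfl⟩; exact theta_isFix H u
  · intro hv; exact ⟨v, theta_of_isFix H hH hv⟩

lemma commute_ringInverse {a r : R} (ha : IsUnit a) (h : Commute r a) :
    Commute r (Ring.inverse a) := by
  have h' : Commute r (↑ha.unit : R) := by rwa [ha.unit_spec]
  rw [← ha.unit_spec, Ring.inverse_unit]
  exact h'.units_inv_right

lemma orbSet_eq_of_mem {j k : Fin n} (h : k ∈ orbSet H j) : orbSet H k = orbSet H j := by
  obtain ⟨g, hg, rfl⟩ := h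
  ext m
  constructor
  · rintro ⟨g', hg', rfl⟩
    exact ⟨g' * g, H.mul_mem hg' hg, rfl⟩
  · rintro ⟨g', hg', rfl⟩
    exact ⟨g' * g⁻¹, H.mul_mem hg' (H.inv_mem hg), by simp [Equiv.Perm.mul_apply]⟩

lemma isFix_eq_of_mem_orb {v : Fin n → R} (hv : isFix H v) {j k : Fin n}
    (h : k ∈ orbSet H j) : v k = v j := by
  obtain ⟨g, hg, rfl⟩ := h
  exact isFix_apply H hv hg j

lemma orb_card_isUnit (hH : IsUnit ((Nat.card H : R))) (j : Fin n) :
    IsUnit ((Nat.card (orbSet H j) : R)) := by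
  have horb : orbSet H j = MulAction.orbit H j := by
    ext m
    constructor
    · rintro ⟨g, hg, rfl⟩; exact ⟨⟨g, hg⟩, rfl⟩
    · rintro ⟨⟨g, hg⟩, rfl⟩; exact ⟨g, hg, rfl⟩
  have hdvd : Nat.card (orbSet H j) ∣ Nat.card H := by
    rw [horb, Nat.card_eq_fintype_card, Nat.card_eq_fintype_card]
    exact Dvd.intro _ (MulAction.card_orbit_mul_card_stabilizer_eq_card_group H j)
  obtain ⟨s, hs⟩ := hdvd
  rw [hs, Nat.cast_mul] at hH
  exact ((Nat.cast_commute _ _).isUnit_mul_iff.1 hH).1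

lemma sum_orbit_decomp {t : ℕ} (rep : Fin t → Fin n)
    (hrep : ∀ j : Fin n, ∃! i : Fin t, j ∈ orbSet H (rep i))
    (F : Fin n → R) (hF : ∀ (i : Fin t) (j : Fin n), j ∈ orbSet H (rep i) → F j = F (rep i)) :
    ∑ j, F j = ∑ i : Fin t, (Nat.card (orbSet H (rep i)) : R) * F (rep i) := by
  have hσmem : ∀ j, j ∈ orbSet H (rep (hrep j).choose) := fun j => (hrep j).choose_spec.1
  have hσuniq : ∀ j i, j ∈ orbSet H (rep i) → (hrep j).choose = i := fun j i hji =>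
    ((hrep j).choose_spec.2 i hji).symm
  rw [← Finset.sum_fiberwise Finset.univ (fun j => (hrep j).choose) F]
  refine Finset.sum_congr rfl fun i _ => ?_
  have hfib : Finset.univ.filter (fun j => (hrep j).choose = i) = (orbSet H (rep i)).toFinset := by
    ext j
    simp only [Finset.mem_filter, Finset.mem_univ, true_and, Set.mem_toFinset]
    exact ⟨fun h => h ▸ hσmem j, fun hj => hσuniq j i hj⟩
  rw [hfib, Finset.sum_congr rfl (fun j hj => hF i j (Set.mem_toFinset.1 hj)),
    Finset.sum_const, Set.toFinset_card, ← Nat.card_eq_fintype_card, nsmul_eq_mul]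

lemma sum_mul_theta {w : Fin n → R} (hw : isFix H w) (hH : IsUnit ((Nat.card H : R)))
    (c : Fin n → R) : ∑ j, w j * theta H c j = ∑ j, w j * c j := by
  have hcomm : ∀ r : R, Commute r (Ring.inverse ((Nat.card H : R))) := fun r =>
    commute_ringInverse hH ((Nat.cast_commute _ r).symm)
  have key : ∀ h : H, (∑ j, w j * c ((h : Equiv.Perm (Fin n))⁻¹ j)) = ∑ j, w j * c j := by
    intro h
    calc ∑ j, w j * c ((h : Equiv.Perm (Fin n))⁻¹ j)
        = ∑ j, w ((h : Equiv.Perm (Fin n)) j) *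
            c ((h : Equiv.Perm (Fin n))⁻¹ ((h : Equiv.Perm (Fin n)) j)) :=
          (Equiv.sum_comp (h : Equiv.Perm (Fin n))
            (fun j => w j * c ((h : Equiv.Perm (Fin n))⁻¹ j))).symm
      _ = ∑ j, w j * c j := by
          refine Finset.sum_congr rfl fun j _ => ?_
          rw [(Equiv.Perm.inv_eq_iff_eq (f := (h : Equiv.Perm (Fin n))) (x := (h : Equiv.Perm (Fin n)) j) (y := j)).mpr rfl, isFix_apply H hw h.2]
  calc ∑ j, w j * theta H c j
      = ∑ j, Ring.inverse ((Nat.card H : R)) *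
          ∑ h : H, w j * c ((h : Equiv.Perm (Fin n))⁻¹ j) := by
        refine Finset.sum_congr rfl fun j _ => ?_
        rw [theta_apply, ← mul_assoc, (hcomm (w j)).eq, mul_assoc, Finset.mul_sum]
    _ = Ring.inverse ((Nat.card H : R)) *
          ∑ h : H, ∑ j, w j * c ((h : Equiv.Perm (Fin n))⁻¹ j) := by
        rw [← Finset.mul_sum, Finset.sum_comm]
    _ = Ring.inverse ((Nat.card H : R)) * ∑ _h : H, ∑ j, w j * c j := by
        rw [Finset.sum_congr rfl fun h _ => key h]
    _ = ∑ j, w j * c j := by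
        rw [Finset.sum_const, Finset.card_univ, nsmul_eq_mul, ← Nat.card_eq_fintype_card,
          ← mul_assoc, Ring.inverse_mul_cancel _ hH, one_mul]

lemma theta_leftDual_pair (G : Subgroup (Equiv.Perm (Fin n))) (hHG : H ≤ G)
    (hH : IsUnit ((Nat.card H : R))) (C : Submodule R (Fin n → R))
    (hC : ∀ c ∈ C, ∀ g ∈ G, pAct g c ∈ C)
    {u : Fin n → R} (hu : u ∈ leftDual (C : Set (Fin n → R)))
    {c : Fin n → R} (hc : c ∈ C) :
    ∑ j, theta H u j * c j = 0 := by
  have key : ∀ h : H, (∑ j, u ((h : Equiv.Perm (Fin n))⁻¹ j) * c j) = 0 := by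
    intro h
    have h1 : ∑ j, u ((h : Equiv.Perm (Fin n))⁻¹ j) * c j
        = ∑ j, u j * pAct ((h : Equiv.Perm (Fin n)))⁻¹ c j := by
      refine (Equiv.sum_comp (h : Equiv.Perm (Fin n))
        (fun j => u ((h : Equiv.Perm (Fin n))⁻¹ j) * c j)).symm.trans ?_
      refine Finset.sum_congr rfl fun j _ => ?_
      rw [(Equiv.Perm.inv_eq_iff_eq (f := (h : Equiv.Perm (Fin n))) (x := (h : Equiv.Perm (Fin n)) j) (y := j)).mpr rfl]
      rfl
    rw [h1]
    exact hu _ (hC c hc _ (G.inv_mem (hHG h.2)))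
  calc ∑ j, theta H u j * c j
      = ∑ j, Ring.inverse ((Nat.card H : R)) *
          ∑ h : H, u ((h : Equiv.Perm (Fin n))⁻¹ j) * c j := by
        refine Finset.sum_congr rfl fun j _ => ?_
        rw [theta_apply, mul_assoc, Finset.sum_mul]
    _ = Ring.inverse ((Nat.card H : R)) *
          ∑ h : H, ∑ j, u ((h : Equiv.Perm (Fin n))⁻¹ j) * c j := by
        rw [← Finset.mul_sum, Finset.sum_comm]
    _ = 0 := by
        rw [Finset.sum_congr rfl fun h _ => key h, Finset.sum_const, smul_zero, mul_zero]

end Stmt3Aux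

/-- `⊥_H (Cθ_H) = ((⊥C)θ_H) M_H`, where the `H`-dual is taken inside `Vθ_H`
(the range of `θ_H`) with respect to the `H`-inner product
`(v,u)_H = ∑ i, v_(rep i) * u_(rep i)` over orbit representatives. -/
theorem stmt3 {n t : ℕ} {R : Type} [Ring R] [Fintype R]
    (G H : Subgroup (Equiv.Perm (Fin n))) (hHG : H ≤ G)
    (hH : IsUnit ((Nat.card H : R)))
    (rep : Fin t → Fin n)
    (hrep : ∀ j : Fin n, ∃! i : Fin t, j ∈ orbSet H (rep i))
    (C : Submodule R (Fin n → R))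
    (hC : ∀ c ∈ C, ∀ g ∈ G, pAct g c ∈ C) :
    {v ∈ Set.range (theta (R := R) H) |
        ∀ u ∈ theta (R := R) H '' (C : Set (Fin n → R)),
          ∑ i : Fin t, v (rep i) * u (rep i) = 0}
      = MH (R := R) H '' (theta (R := R) H '' leftDual (C : Set (Fin n → R))) := by
  classical
  have horbunit : ∀ j, IsUnit ((Nat.card (orbSet H j) : R)) := orb_card_isUnit H hH
  ext v
  simp only [Set.mem_setOf_eq, Set.mem_image]
  constructor
  · rintro ⟨hvrange, hv⟩
    have hvfix : isFix H v := by rw [range_theta H hH] at hvrange; exact hvrange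
    set w : Fin n → R := fun j => Ring.inverse ((Nat.card (orbSet H j) : R)) * v j with hw
    have hwfix : isFix H w := by
      intro h hh i
      have horb : orbSet H (h⁻¹ i) = orbSet H i :=
        orbSet_eq_of_mem H ⟨h⁻¹, H.inv_mem hh, rfl⟩
      simp only [hw]
      rw [horb, hvfix h hh i]
    have hwdual : w ∈ leftDual (C : Set (Fin n → R)) := by
      intro c hc
      have h1 : ∑ j, w j * c j = ∑ j, w j * theta H c j := (sum_mul_theta H hwfix hH c).symm
      have h2 : ∑ j, w j * theta H c j
          = ∑ i : Fin t, (Nat.card (orbSet H (rep i)) : R) * (w (rep i) * theta H c (rep i)) := by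
        refine sum_orbit_decomp H rep hrep _ fun i j hj => ?_
        rw [isFix_eq_of_mem_orb H hwfix hj, isFix_eq_of_mem_orb H (theta_isFix H c) hj]
      have h3 : ∀ i : Fin t,
          (Nat.card (orbSet H (rep i)) : R) * (w (rep i) * theta H c (rep i))
            = v (rep i) * theta H c (rep i) := by
        intro i
        simp only [hw]
        rw [← mul_assoc, ← mul_assoc, Ring.mul_inverse_cancel _ (horbunit _), one_mul]
      rw [h1, h2, Finset.sum_congr rfl fun i _ => h3 i]
      exact hv (theta H c) ⟨c, hc, rfl⟩
    refine ⟨theta H w, ⟨w, hwdual, rfl⟩, ?_⟩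
    rw [theta_of_isFix H hH hwfix]
    funext j
    show (Nat.card (orbSet H j) : R) * w j = v j
    simp only [hw]
    rw [← mul_assoc, Ring.mul_inverse_cancel _ (horbunit j), one_mul]
  · rintro ⟨x, ⟨u, hu, rfl⟩, rfl⟩
    set w : Fin n → R := theta H u with hw
    have hwfix : isFix H w := theta_isFix H u
    have hvfix : isFix H (MH H w) := by
      intro h hh i
      have horb : orbSet H (h⁻¹ i) = orbSet H i :=
        orbSet_eq_of_mem H ⟨h⁻¹, H.inv_mem hh, rfl⟩
      show (Nat.card (orbSet H (h⁻¹ i)) : R) * w (h⁻¹ i) = (Nat.card (orbSet H i) : R) * w i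
      rw [horb, hwfix h hh i]
    constructor
    · rw [range_theta H hH]; exact hvfix
    · rintro u' ⟨c, hc, rfl⟩
      have h2 : ∑ j, w j * theta H c j
          = ∑ i : Fin t, (Nat.card (orbSet H (rep i)) : R) * (w (rep i) * theta H c (rep i)) := by
        refine sum_orbit_decomp H rep hrep _ fun i j hj => ?_
        rw [isFix_eq_of_mem_orb H hwfix hj, isFix_eq_of_mem_orb H (theta_isFix H c) hj]
      calc ∑ i : Fin t, MH H w (rep i) * theta H c (rep i)
          = ∑ i : Fin t, (Nat.card (orbSet H (rep i)) : R) * (w (rep i) * theta H c (rep i)) :=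
            Finset.sum_congr rfl fun i _ => mul_assoc _ _ _
        _ = ∑ j, w j * theta H c j := h2.symm
        _ = ∑ j, w j * c j := sum_mul_theta H hwfix hH c
        _ = 0 := theta_leftDual_pair H G hHG hH C hC hu hc
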